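/- For any stochastic matrix W from a finite set X to pmfs on a finite set Y, the function α ↦ ((1-α)/α)·C_α(W) is nonincreasing in α on (0,1), where C_α(W) is the order-α Rényi capacity. -/

import Mathlib

open Real MeasureTheory Filter

def IsPMF {Y : Type*} [Fintype Y] (W : Y → ℝ) : Prop :=
  (∀ y, 0 ≤ W y) ∧ ∑ y, W y = 1

noncomputable def renyiDiv {Y : Type*} [Fintype Y] (α : ℝ) (W Q : Y → ℝ) : ℝ :=
  if α = 1 then ∑ y, W y * Real.log (W y / Q y)
  else (α - 1)⁻¹ * Real.log (∑ y, W y ^ α * Q y ^ (1 - α))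

open Classical in
/-- Extended-real-valued order-`α` Rényi divergence, taking the value `⊤` when the
divergence is infinite. -/
noncomputable def renyiDivE {Y : Type*} [Fintype Y] (α : ℝ) (W Q : Y → ℝ) : ENNReal :=
  if α = 1 then
    (if ∀ y, Q y = 0 → W y = 0 then ENNReal.ofReal (renyiDiv 1 W Q) else ⊤)
  else
    (if 0 < ∑ y, W y ^ α * Q y ^ (1 - α) then ENNReal.ofReal (renyiDiv α W Q) else ⊤)

/-- The order-`α` tilted pmf `W^α_Q`. -/
noncomputable def tilt {Y : Type*} [Fintype Y] (α : ℝ) (W Q : Y → ℝ) : Y → ℝ :=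
  fun y => Real.exp ((1 - α) * renyiDiv α W Q) * W y ^ α * Q y ^ (1 - α)

/-- The order-`α` Rényi information `I_α(P;W)` (mutual information for `α = 1`). -/
noncomputable def renyiInfo {X Y : Type*} [Fintype X] [Fintype Y] (α : ℝ) (P : X → ℝ)
    (W : X → Y → ℝ) : ℝ :=
  if α = 1 then ∑ x, P x * ∑ y, W x y * Real.log (W x y / (∑ x', P x' * W x' y))
  else (α / (α - 1)) * Real.log (∑ y, (∑ x, P x * W x y ^ α) ^ α⁻¹)

/-- The order-`α` Rényi capacity `C_α(W) = sup_P I_α(P;W)`. -/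
noncomputable def renyiCap {X Y : Type*} [Fintype X] [Fintype Y] (α : ℝ) (W : X → Y → ℝ) : ℝ :=
  sSup {c | ∃ P : X → ℝ, IsPMF P ∧ c = renyiInfo α P W}

/-- The sphere packing exponent `E_sp(R,W)`. -/
noncomputable def spe {X Y : Type*} [Fintype X] [Fintype Y] (R : ℝ) (W : X → Y → ℝ) : ℝ :=
  sSup {e | ∃ α ∈ Set.Ioo (0:ℝ) 1, e = ((1 - α) / α) * (renyiCap α W - R)}

/-- The order-`α` Rényi mean `q_{α,P}`. -/
noncomputable def renyiMean {X Y : Type*} [Fintype X] [Fintype Y] (α : ℝ) (P : X → ℝ)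
    (W : X → Y → ℝ) : Y → ℝ :=
  fun y => (∑ x, P x * W x y ^ α) ^ α⁻¹ / ∑ y', (∑ x, P x * W x y' ^ α) ^ α⁻¹

section MyAux

variable {X Y : Type*} [Fintype X] [Fintype Y]

noncomputable def rsF (α : ℝ) (P : X → ℝ) (W : X → Y → ℝ) : ℝ :=
  ∑ y, (∑ x, P x * W x y ^ α) ^ α⁻¹

lemma rsF_lb [Nonempty X] {α : ℝ} {P : X → ℝ} {W : X → Y → ℝ}
    (hP : IsPMF P) (hW : ∀ x, IsPMF (W x)) (hα : 0 < α) :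
    ((Fintype.card X : ℝ)⁻¹) ^ α⁻¹ ≤ rsF α P W := by
  obtain ⟨x0, -, hx0⟩ : ∃ x ∈ Finset.univ, (Fintype.card X : ℝ)⁻¹ ≤ P x := by
    apply Finset.exists_le_of_sum_le Finset.univ_nonempty
    rw [Finset.sum_const, hP.2, nsmul_eq_mul, Finset.card_univ,
      mul_inv_cancel₀ (by exact_mod_cast Fintype.card_ne_zero)]
  have h2 : ∑ y, (P x0 * W x0 y ^ α) ^ α⁻¹ = P x0 ^ α⁻¹ := by
    have : ∀ y, (P x0 * W x0 y ^ α) ^ α⁻¹ = P x0 ^ α⁻¹ * W x0 y := by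
      intro y
      rw [Real.mul_rpow (le_trans (by positivity) hx0) (Real.rpow_nonneg ((hW x0).1 y) _),
        Real.rpow_rpow_inv ((hW x0).1 y) hα.ne']
    simp only [this, ← Finset.mul_sum, (hW x0).2, mul_one]
  calc ((Fintype.card X : ℝ)⁻¹) ^ α⁻¹ ≤ P x0 ^ α⁻¹ := by
        apply Real.rpow_le_rpow (by positivity) hx0 (by positivity)
    _ = ∑ y, (P x0 * W x0 y ^ α) ^ α⁻¹ := h2.symm
    _ ≤ rsF α P W := by
        apply Finset.sum_le_sum
        intro y _
        apply Real.rpow_le_rpow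
          (mul_nonneg (hP.1 x0) (Real.rpow_nonneg ((hW x0).1 y) _))
          (Finset.single_le_sum
            (fun x _ => mul_nonneg (hP.1 x) (Real.rpow_nonneg ((hW x).1 y) _))
            (Finset.mem_univ x0))
          (by positivity)

lemma rsF_pos [Nonempty X] {α : ℝ} {P : X → ℝ} {W : X → Y → ℝ}
    (hP : IsPMF P) (hW : ∀ x, IsPMF (W x)) (hα : 0 < α) : 0 < rsF α P W :=
  lt_of_lt_of_le (by positivity) (rsF_lb hP hW hα)

lemma rsF_mono {α β : ℝ} {P : X → ℝ} {W : X → Y → ℝ}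
    (hP : IsPMF P) (hW : ∀ x, IsPMF (W x)) (hα : 0 < α) (hab : α ≤ β) :
    rsF α P W ≤ rsF β P W := by
  have hβ : 0 < β := lt_of_lt_of_le hα hab
  apply Finset.sum_le_sum
  intro y _
  have hB : (0:ℝ) ≤ ∑ x, P x * W x y ^ β :=
    Finset.sum_nonneg fun x _ => mul_nonneg (hP.1 x) (Real.rpow_nonneg ((hW x).1 y) _)
  have hp : 1 ≤ β / α := (one_le_div hα).2 hab
  have hmean := Real.arith_mean_le_rpow_mean Finset.univ P (fun x => W x y ^ α)
    (fun x _ => hP.1 x) hP.2 (fun x _ => Real.rpow_nonneg ((hW x).1 y) _) hp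
  have hz : ∀ x : X, ((W x y ^ α) ^ (β / α)) = W x y ^ β := by
    intro x
    rw [← Real.rpow_mul ((hW x).1 y)]
    congr 1
    field_simp
  simp only [hz, one_div, inv_div] at hmean
  calc (∑ x, P x * W x y ^ α) ^ α⁻¹
      ≤ ((∑ x, P x * W x y ^ β) ^ (α / β)) ^ α⁻¹ := by
        apply Real.rpow_le_rpow
          (Finset.sum_nonneg fun x _ => mul_nonneg (hP.1 x) (Real.rpow_nonneg ((hW x).1 y) _))
          hmean (by positivity)
    _ = (∑ x, P x * W x y ^ β) ^ β⁻¹ := by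
        rw [← Real.rpow_mul hB]
        congr 1
        field_simp

lemma rsInfo_eq {α : ℝ} {P : X → ℝ} {W : X → Y → ℝ} (hα : α ∈ Set.Ioo (0:ℝ) 1) :
    ((1 - α) / α) * renyiInfo α P W = - Real.log (rsF α P W) := by
  rw [renyiInfo, if_neg hα.2.ne, rsF]
  have h1 : α ≠ 0 := hα.1.ne'
  have h2 : α - 1 ≠ 0 := by have := hα.2; intro h; linarith [sub_eq_zero.mp h]
  field_simp
  ring

end MyAux

/-- `((1-α)/α)·C_α(W)` is nonincreasing in `α` on `(0,1)`. -/
theorem renyiCap_scaled_antitone {X Y : Type*} [Fintype X] [Fintype Y] [Nonempty X]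
    (W : X → Y → ℝ) (hW : ∀ x, IsPMF (W x)) :
    AntitoneOn (fun α => ((1 - α) / α) * renyiCap α W) (Set.Ioo 0 1) := by
  intro α hα β hβ hab
  have hcα : 0 < (1 - α) / α := div_pos (by linarith [hα.2]) hα.1
  have hcβ : 0 < (1 - β) / β := div_pos (by linarith [hβ.2]) hβ.1
  have hU : IsPMF (fun _ : X => (Fintype.card X : ℝ)⁻¹) := by
    constructor
    · intro y; positivity
    · rw [Finset.sum_const, nsmul_eq_mul, Finset.card_univ,
        mul_inv_cancel₀ (by exact_mod_cast Fintype.card_ne_zero)]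
  -- bound on renyiInfo α
  set M : ℝ := (α⁻¹ * Real.log (Fintype.card X)) / ((1 - α) / α) with hM
  have hbound : ∀ P : X → ℝ, IsPMF P → renyiInfo α P W ≤ M := by
    intro P hP
    rw [hM, le_div_iff₀ hcα, mul_comm]
    rw [rsInfo_eq hα]
    have hlb := rsF_lb (X := X) (Y := Y) hP hW hα.1
    have hlog : Real.log (((Fintype.card X : ℝ)⁻¹) ^ α⁻¹) ≤ Real.log (rsF α P W) :=
      Real.log_le_log (by positivity) hlb
    rw [Real.log_rpow (by positivity), Real.log_inv] at hlog
    linarith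
  have hbdd : BddAbove {c | ∃ P : X → ℝ, IsPMF P ∧ c = renyiInfo α P W} := by
    refine ⟨M, ?_⟩
    rintro c ⟨P, hP, rfl⟩
    exact hbound P hP
  have key : ∀ P : X → ℝ, IsPMF P →
      ((1 - β) / β) * renyiInfo β P W ≤ ((1 - α) / α) * renyiCap α W := by
    intro P hP
    rw [rsInfo_eq hβ]
    have h3 : - Real.log (rsF β P W) ≤ - Real.log (rsF α P W) := by
      apply neg_le_neg
      exact Real.log_le_log (rsF_pos hP hW hα.1) (rsF_mono hP hW hα.1 hab)
    have h4 : renyiInfo α P W ≤ renyiCap α W :=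
      le_csSup hbdd ⟨P, hP, rfl⟩
    calc - Real.log (rsF β P W) ≤ - Real.log (rsF α P W) := h3
      _ = ((1 - α) / α) * renyiInfo α P W := (rsInfo_eq hα).symm
      _ ≤ ((1 - α) / α) * renyiCap α W := mul_le_mul_of_nonneg_left h4 hcα.le
  simp only
  rw [renyiCap]
  have hsup : sSup {c | ∃ P : X → ℝ, IsPMF P ∧ c = renyiInfo β P W}
      ≤ (((1 - α) / α) * renyiCap α W) / ((1 - β) / β) := by
    have hneS : {c | ∃ P : X → ℝ, IsPMF P ∧ c = renyiInfo β P W}.Nonempty :=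
      ⟨renyiInfo β (fun _ : X => (Fintype.card X : ℝ)⁻¹) W, ⟨_, hU, rfl⟩⟩
    apply csSup_le hneS
    rintro c ⟨P, hP, rfl⟩
    rw [le_div_iff₀ hcβ, mul_comm]
    exact key P hP
  calc ((1 - β) / β) * sSup {c | ∃ P : X → ℝ, IsPMF P ∧ c = renyiInfo β P W}
      ≤ ((1 - β) / β) * ((((1 - α) / α) * renyiCap α W) / ((1 - β) / β)) :=
        mul_le_mul_of_nonneg_left hsup hcβ.le
    _ = ((1 - α) / α) * renyiCap α W := by
        rw [mul_comm, div_mul_cancel₀ _ hcβ.ne']
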